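/- arXiv:1501.02328 — 4 statements merged into one kernel-verified Lean document; each statement's English description precedes it below -/
import Mathlib

section
/- Let n ≥ 1 and consider the map π : Matrix (Fin n) (Fin n) ℂ → Herm(n) × ℂ defined by π(X) = (X X*, det X), where X* is the conjugate transpose. Then the fibres of π coincide exactly with the orbits of the right action of SU(n) given by X ↦ X C⁻¹ for C ∈ SU(n) (i.e. π(X) = π(Y) if and only if Y = X C for some C ∈ SU(n)). -/
open Matrix

/-- The map `π : X ↦ (X X*, det X)` into (Hermitian matrices) × ℂ. -/
noncomputable def piMap (n : ℕ) (X : Matrix (Fin n) (Fin n) ℂ) :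
    {A : Matrix (Fin n) (Fin n) ℂ // A.IsHermitian} × ℂ :=
  (⟨X * Xᴴ, Matrix.isHermitian_mul_conjTranspose_self X⟩, X.det)

open scoped InnerProductSpace in
/-- Composition of `toEuclideanLin` corresponds to matrix multiplication. -/
lemma toEuclideanLin_mul_apply {n : ℕ} (P Q : Matrix (Fin n) (Fin n) ℂ)
    (v : EuclideanSpace ℂ (Fin n)) :
    Matrix.toEuclideanLin (P * Q) v = Matrix.toEuclideanLin P (Matrix.toEuclideanLin Q v) := by
  simp [Matrix.toEuclideanLin_apply, Matrix.mulVec_mulVec]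

open scoped InnerProductSpace in

lemma exists_isometry_extend {V : Type*} [NormedAddCommGroup V] [InnerProductSpace ℂ V]
    [FiniteDimensional ℂ V] (A B : V →ₗ[ℂ] V)
    (hinner : ∀ u v, ⟪A u, A v⟫_ℂ = ⟪B u, B v⟫_ℂ) :
    ∃ Lext : V →ₗᵢ[ℂ] V, ∀ v, Lext (A v) = B v := by
  have hker : LinearMap.ker A ≤ LinearMap.ker B := by
    intro v hv
    rw [LinearMap.mem_ker] at hv ⊢
    have := hinner v v
    rw [hv, inner_zero_left] at this
    exact inner_self_eq_zero.mp this.symm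
  obtain ⟨L, hL⟩ : ∃ L : LinearMap.range A →ₗ[ℂ] V,
      ∀ v, L ⟨A v, LinearMap.mem_range_self A v⟩ = B v := by
    refine ⟨((LinearMap.ker A).liftQ B hker) ∘ₗ A.quotKerEquivRange.symm.toLinearMap, fun v => ?_⟩
    show ((LinearMap.ker A).liftQ B hker) (A.quotKerEquivRange.symm ⟨A v, _⟩) = B v
    rw [A.quotKerEquivRange_symm_apply_image]
    exact Submodule.liftQ_apply _ B v
  have hLinner : ∀ x y, ⟪L x, L y⟫_ℂ = ⟪x, y⟫_ℂ := by
    rintro ⟨x, hx⟩ ⟨y, hy⟩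
    obtain ⟨u, rfl⟩ := hx
    obtain ⟨v, rfl⟩ := hy
    rw [hL u, hL v, Submodule.coe_inner]
    exact (hinner u v).symm
  refine ⟨(L.isometryOfInner hLinner).extend, fun v => ?_⟩
  have h1 := (L.isometryOfInner hLinner).extend_apply ⟨A v, LinearMap.mem_range_self A v⟩
  have h2 : (L.isometryOfInner hLinner) ⟨A v, LinearMap.mem_range_self A v⟩
      = L ⟨A v, LinearMap.mem_range_self A v⟩ := rfl
  rw [h2, hL v] at h1
  exact h1

open scoped InnerProductSpace in
/-- Polar-type lemma: if `X Xᴴ = Y Yᴴ` then `Yᴴ = M Xᴴ` for some unitary `M`. -/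
lemma exists_unitary_of_mul_conjTranspose_eq {n : ℕ} (X Y : Matrix (Fin n) (Fin n) ℂ)
    (h : X * Xᴴ = Y * Yᴴ) :
    ∃ M : Matrix (Fin n) (Fin n) ℂ, Mᴴ * M = 1 ∧ Yᴴ = M * Xᴴ := by
  set A : EuclideanSpace ℂ (Fin n) →ₗ[ℂ] EuclideanSpace ℂ (Fin n) :=
    Matrix.toEuclideanLin Xᴴ with hA
  set B : EuclideanSpace ℂ (Fin n) →ₗ[ℂ] EuclideanSpace ℂ (Fin n) :=
    Matrix.toEuclideanLin Yᴴ with hB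
  have hadjA : LinearMap.adjoint A = Matrix.toEuclideanLin X := by
    rw [hA, ← Matrix.toEuclideanLin_conjTranspose_eq_adjoint, conjTranspose_conjTranspose]
  have hadjB : LinearMap.adjoint B = Matrix.toEuclideanLin Y := by
    rw [hB, ← Matrix.toEuclideanLin_conjTranspose_eq_adjoint, conjTranspose_conjTranspose]
  have hcomp : ∀ v, LinearMap.adjoint A (A v) = LinearMap.adjoint B (B v) := by
    intro v
    rw [hadjA, hadjB, hA, hB, ← toEuclideanLin_mul_apply, ← toEuclideanLin_mul_apply, h]
  have hinner : ∀ u v, ⟪A u, A v⟫_ℂ = ⟪B u, B v⟫_ℂ := by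
    intro u v
    rw [← LinearMap.adjoint_inner_right, ← LinearMap.adjoint_inner_right, hcomp]
  obtain ⟨Lext, hext⟩ := exists_isometry_extend A B hinner
  set M : Matrix (Fin n) (Fin n) ℂ := Matrix.toEuclideanLin.symm Lext.toLinearMap with hMdef
  have hM : Matrix.toEuclideanLin M = Lext.toLinearMap := by
    rw [hMdef, LinearEquiv.apply_symm_apply]
  refine ⟨M, ?_, ?_⟩
  · apply Matrix.toEuclideanLin.injective
    apply LinearMap.ext
    intro v
    rw [toEuclideanLin_mul_apply]
    have h1 : Matrix.toEuclideanLin Mᴴ = LinearMap.adjoint (Matrix.toEuclideanLin M) :=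
      Matrix.toEuclideanLin_conjTranspose_eq_adjoint M
    rw [h1, hM]
    have h3 : LinearMap.adjoint (Lext.toLinearMap) (Lext.toLinearMap v) = v := by
      apply ext_inner_left ℂ
      intro x
      rw [LinearMap.adjoint_inner_right]
      exact Lext.inner_map_map x v
    rw [h3]
    simp [Matrix.toEuclideanLin_apply, Matrix.one_mulVec]
  · apply Matrix.toEuclideanLin.injective
    apply LinearMap.ext
    intro v
    rw [toEuclideanLin_mul_apply, hM, ← hA, ← hB]
    exact (hext v).symm

open scoped ComplexOrder in
/-- Given a singular matrix `X` and a unit scalar `μ`, there is a unitary `W`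
with `X W = X` and `det W = μ`. -/
lemma exists_unitary_fix {n : ℕ} (X : Matrix (Fin n) (Fin n) ℂ) (hX : X.det = 0)
    (μ : ℂ) (hμ : μ * star μ = 1) :
    ∃ W : Matrix (Fin n) (Fin n) ℂ, W * Wᴴ = 1 ∧ W.det = μ ∧ X * W = X := by
  obtain ⟨v, hv0, hv⟩ := (Matrix.exists_mulVec_eq_zero_iff).mpr hX
  set c : ℂ := star v ⬝ᵥ v with hc
  have hc0 : c ≠ 0 := fun hh => hv0 (dotProduct_star_self_eq_zero.mp hh)
  have hcstar : star c = c := by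
    simp [hc, dotProduct, star_sum, mul_comm]
  set a : ℂ := (μ - 1) * c⁻¹ with ha
  have hsa : star a = (star μ - 1) * c⁻¹ := by
    rw [ha, star_mul', star_inv₀, hcstar, star_sub, star_one]
  set K : Matrix (Fin n) (Fin n) ℂ := Matrix.replicateCol Unit v * Matrix.replicateRow Unit (star v) with hK
  have hKH : Kᴴ = K := by
    rw [hK, conjTranspose_mul, conjTranspose_replicateRow, conjTranspose_replicateCol, star_star]
  have hKK : K * K = c • K := by
    rw [hK]
    have hrow : Matrix.replicateRow Unit (star v) * Matrix.replicateCol Unit v = c • (1 : Matrix Unit Unit ℂ) := by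
      ext i j
      simp [Matrix.one_apply, Subsingleton.elim i j, hc]
    calc Matrix.replicateCol Unit v * Matrix.replicateRow Unit (star v) *
          (Matrix.replicateCol Unit v * Matrix.replicateRow Unit (star v))
        = Matrix.replicateCol Unit v * (Matrix.replicateRow Unit (star v) * Matrix.replicateCol Unit v) *
            Matrix.replicateRow Unit (star v) := by
          simp only [Matrix.mul_assoc]
      _ = c • (Matrix.replicateCol Unit v * Matrix.replicateRow Unit (star v)) := by
          rw [hrow]; simp [Matrix.mul_smul, Matrix.smul_mul]
  have key : star a + (a + a * star a * c) = 0 := by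
    rw [ha, hsa]
    have hμ' : μ * (starRingEnd ℂ) μ = 1 := hμ
    field_simp
    linear_combination hμ
  refine ⟨1 + a • K, ?_, ?_, ?_⟩
  · have hH : (1 + a • K)ᴴ = 1 + star a • K := by
      rw [conjTranspose_add, conjTranspose_smul, hKH, conjTranspose_one]
    rw [hH]
    have expand : (1 + a • K) * (1 + star a • K)
        = 1 + (star a • K + (a • K + (a * star a * c) • K)) := by
      rw [add_mul, one_mul, mul_add, mul_one, smul_mul_smul_comm, hKK, smul_smul,
        mul_assoc]
      abel
    rw [expand, ← add_smul, ← add_smul, key, zero_smul, add_zero]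
  · have hrw : (1 : Matrix (Fin n) (Fin n) ℂ) + a • K
        = 1 + Matrix.replicateCol Unit (a • v) * Matrix.replicateRow Unit (star v) := by
      rw [hK, Matrix.replicateCol_smul, Matrix.smul_mul]
    rw [hrw, Matrix.det_one_add_replicateCol_mul_replicateRow, dotProduct_smul, ha, ← hc]
    rw [smul_eq_mul]
    field_simp
    ring
  · rw [mul_add, mul_one, Matrix.mul_smul, hK, ← Matrix.mul_assoc, ← Matrix.replicateCol_mulVec, hv]
    simp

/-- The fibres of `π(X) = (X X*, det X)` coincide with the orbits of the right action
`X ↦ X C⁻¹` of `SU(n)`. -/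
theorem stmt2 (n : ℕ) (hn : 1 ≤ n) (X Y : Matrix (Fin n) (Fin n) ℂ) :
    piMap n X = piMap n Y ↔
      ∃ C : Matrix (Fin n) (Fin n) ℂ, C * Cᴴ = 1 ∧ C.det = 1 ∧ Y = X * C := by
  constructor
  · intro h
    have h1 : X * Xᴴ = Y * Yᴴ := congrArg (fun p =>
      (p.1 : { A : Matrix (Fin n) (Fin n) ℂ // A.IsHermitian }).val) h
    have h2 : X.det = Y.det := congrArg Prod.snd h
    obtain ⟨M, hM1, hM2⟩ := exists_unitary_of_mul_conjTranspose_eq X Y h1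
    have hYXM : Y = X * Mᴴ := by
      have := congrArg conjTranspose hM2
      rwa [conjTranspose_conjTranspose, conjTranspose_mul, conjTranspose_conjTranspose] at this
    have hMunit : Mᴴ * (Mᴴ)ᴴ = 1 := by rwa [conjTranspose_conjTranspose]
    by_cases hdet : X.det = 0
    · have hdM : det Mᴴ * star (det Mᴴ) = 1 := by
        rw [det_conjTranspose, star_star]
        have := congrArg det hM1
        rwa [det_mul, det_conjTranspose, det_one] at this
      obtain ⟨W, hW1, hW2, hW3⟩ := exists_unitary_fix X hdet (star (det Mᴴ))
        (by rw [star_star, mul_comm]; exact hdM)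
      refine ⟨W * Mᴴ, ?_, ?_, ?_⟩
      · rw [conjTranspose_mul, conjTranspose_conjTranspose, Matrix.mul_assoc,
          ← Matrix.mul_assoc Mᴴ, hM1, one_mul]
        exact hW1
      · rw [det_mul, hW2, mul_comm]
        exact hdM
      · rw [← Matrix.mul_assoc, hW3]
        exact hYXM
    · refine ⟨Mᴴ, hMunit, ?_, hYXM⟩
      have hd : X.det * det Mᴴ = X.det * 1 := by
        rw [mul_one, ← det_mul, ← hYXM, h2]
      exact mul_left_cancel₀ hdet hd
  · rintro ⟨C, hC1, hC2, rfl⟩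
    unfold piMap
    refine Prod.ext (Subtype.ext ?_) ?_
    · show X * Xᴴ = X * C * (X * C)ᴴ
      rw [conjTranspose_mul, Matrix.mul_assoc, ← Matrix.mul_assoc C, hC1, one_mul]
    · show X.det = (X * C).det
      rw [det_mul, hC2, mul_one]
end

section
/- Let n ≥ 1. The image of the map π : Matrix (Fin n) (Fin n) ℂ → Herm(n) × ℂ, π(X) = (X X*, det X), is exactly the set M(n,ℂ) = {(A, λ) ∈ Herm(n) × ℂ : A is positive semidefinite and det A = |λ|²}. -/
open Matrix
open scoped ComplexOrder

/-- The image of `π(X) = (X X*, det X)` is exactly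
`M(n,ℂ) = {(A, λ) : A positive semidefinite, det A = |λ|²}`. -/
theorem stmt3 (n : ℕ) (hn : 1 ≤ n) :
    Set.range (piMap n) =
      {p : {A : Matrix (Fin n) (Fin n) ℂ // A.IsHermitian} × ℂ |
        (p.1 : Matrix (Fin n) (Fin n) ℂ).PosSemidef ∧
        (p.1 : Matrix (Fin n) (Fin n) ℂ).det = ((‖p.2‖ : ℝ) : ℂ) ^ 2} := by
  ext p
  constructor
  · rintro ⟨X, rfl⟩
    refine ⟨Matrix.posSemidef_self_mul_conjTranspose X, ?_⟩
    simp only [piMap, Matrix.det_mul, Matrix.det_conjTranspose]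
    rw [show (‖X.det‖ : ℂ) ^ 2 = (Complex.normSq X.det : ℂ) by
      rw [← Complex.sq_norm]; push_cast; ring]
    exact Complex.mul_conj X.det
  · obtain ⟨⟨A, hA⟩, l⟩ := p
    rintro ⟨hpsd, hdet⟩
    simp only at hpsd hdet
    open scoped MatrixOrder in
    set S := CFC.sqrt A with hSdef
    open scoped MatrixOrder in
    have hSH : Sᴴ = S := (CFC.sqrt_nonneg A).posSemidef.1
    open scoped MatrixOrder in
    have hSS : S * S = A := CFC.sqrt_mul_sqrt_self A hpsd.nonneg
    have hdetSS : S.det * S.det = A.det := by rw [← Matrix.det_mul, hSS]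
    by_cases h0 : S.det = 0
    · have hl : l = 0 := by
        have : (‖l‖ : ℂ) ^ 2 = 0 := by rw [← hdet, ← hdetSS, h0, mul_zero]
        have : ‖l‖ = 0 := by
          have h2 : (‖l‖ : ℂ) = 0 := pow_eq_zero_iff two_ne_zero |>.mp this
          exact_mod_cast h2
        exact norm_eq_zero.mp this
      refine ⟨S, ?_⟩
      simp only [piMap, hl, Prod.mk.injEq, Subtype.mk.injEq]
      rw [hSH]
      exact ⟨hSS, h0⟩
    · -- |det S| = |l|
      have habs : ‖S.det‖ = ‖l‖ := by
        have h1 : ‖S.det‖ ^ 2 = ‖l‖ ^ 2 := by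
          have h2 := congrArg norm (hdetSS.trans hdet)
          rw [norm_mul, norm_pow, Complex.norm_real,
            norm_norm, ← sq] at h2
          exact h2
        nlinarith [norm_nonneg S.det, norm_nonneg l]
      set μ : ℂ := l / S.det with hμ
      have hμnorm : μ * (starRingEnd ℂ) μ = 1 := by
        rw [Complex.mul_conj]
        norm_cast
        rw [hμ, Complex.normSq_div]
        have : Complex.normSq S.det ≠ 0 := fun h => h0 (Complex.normSq_eq_zero.mp h)
        rw [div_eq_one_iff_eq this, ← Complex.sq_norm, ← Complex.sq_norm, habs]
      set d : Fin n → ℂ := fun i => if i = ⟨0, hn⟩ then μ else 1 with hd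
      set U := Matrix.diagonal d with hU
      have hUU : U * Uᴴ = 1 := by
        rw [hU, Matrix.diagonal_conjTranspose, Matrix.diagonal_mul_diagonal]
        ext i j
        by_cases hij : i = j
        · subst hij
          by_cases hi : i = ⟨0, hn⟩ <;>
            simp [Matrix.diagonal_apply_eq, Matrix.one_apply_eq, hd, hi, hμnorm]
        · simp [Matrix.diagonal_apply_ne _ hij, Matrix.one_apply_ne hij]
      have hdetU : U.det = μ := by
        rw [hU, Matrix.det_diagonal, hd]
        simp
      refine ⟨S * U, ?_⟩
      simp only [piMap, Prod.mk.injEq, Subtype.mk.injEq]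
      constructor
      · rw [Matrix.conjTranspose_mul, ← mul_assoc, mul_assoc S U, hUU, mul_one, hSH, hSS]
      · rw [Matrix.det_mul, hdetU, hμ, mul_div_cancel₀ _ h0]
end

section
/- Let n ≥ 1. The map from M(n,ℂ) = {(A, λ) ∈ Herm(n) × ℂ : A positive semidefinite, det A = |λ|²} to (Herm(n) / ℝ·I) × ℂ sending (A, λ) to (A + ℝ·I, λ) is a bijection, where A + ℝ·I denotes the image of A in the quotient of the real vector space Herm(n) by the line spanned by the identity matrix I. -/
open Matrix
open scoped ComplexOrder

/-- The real vector space of complex Hermitian (self-adjoint) `n × n` matrices,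
as a real submodule of the matrix space. -/
noncomputable abbrev HermSub (n : ℕ) : Submodule ℝ (Matrix (Fin n) (Fin n) ℂ) :=
  selfAdjoint.submodule ℝ (Matrix (Fin n) (Fin n) ℂ)

lemma one_mem_hermSub (n : ℕ) : (1 : Matrix (Fin n) (Fin n) ℂ) ∈ HermSub n :=
  IsSelfAdjoint.one _

lemma mulH_mem_hermSub {n m : ℕ} (X : Matrix (Fin n) (Fin m) ℂ) : X * Xᴴ ∈ HermSub n :=
  Matrix.isHermitian_mul_conjTranspose_self X

lemma conj_mem_hermSub {n : ℕ} (C : Matrix (Fin n) (Fin n) ℂ) (A : HermSub n) :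
    C * (A : Matrix (Fin n) (Fin n) ℂ) * Cᴴ ∈ HermSub n :=
  Matrix.isHermitian_mul_mul_conjTranspose C (A.2 : (A : Matrix (Fin n) (Fin n) ℂ).IsHermitian)

/-- The real line `ℝ·I` inside the space of Hermitian matrices. -/
noncomputable def lineI (n : ℕ) : Submodule ℝ (HermSub n) :=
  Submodule.span ℝ {(⟨1, one_mem_hermSub n⟩ : HermSub n)}

/-- `M(n,ℂ)`: pairs `(A, λ)` with `A` Hermitian positive semidefinite and `det A = |λ|²`. -/
def MSet (n : ℕ) : Set (HermSub n × ℂ) :=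
  {q | (q.1 : Matrix (Fin n) (Fin n) ℂ).PosSemidef ∧
    (q.1 : Matrix (Fin n) (Fin n) ℂ).det = (‖q.2‖ : ℂ) ^ 2}

/- ### Auxiliary lemmas -/

section Aux

variable {n : ℕ}

lemma aux_rsmul_one (s : ℝ) :
    s • (1 : Matrix (Fin n) (Fin n) ℂ) = (s : ℂ) • 1 := by
  ext i j
  simp [Matrix.smul_apply, Complex.real_smul]

lemma aux_shift_eq (A : Matrix (Fin n) (Fin n) ℂ) (hA : A.IsHermitian) (t : ℝ) :
    A + (t : ℂ) • 1 = (hA.eigenvectorUnitary : Matrix (Fin n) (Fin n) ℂ) *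
      diagonal (fun i => ((hA.eigenvalues i + t : ℝ) : ℂ)) *
      (star (hA.eigenvectorUnitary : Matrix (Fin n) (Fin n) ℂ)) := by
  have hU : (hA.eigenvectorUnitary : Matrix (Fin n) (Fin n) ℂ) *
      star (hA.eigenvectorUnitary : Matrix (Fin n) (Fin n) ℂ) = 1 :=
    Matrix.mem_unitaryGroup_iff.mp hA.eigenvectorUnitary.2
  conv_lhs => rw [hA.spectral_theorem, Unitary.conjStarAlgAut_apply]
  have h1 : (t : ℂ) • (1 : Matrix (Fin n) (Fin n) ℂ) =
      (hA.eigenvectorUnitary : Matrix (Fin n) (Fin n) ℂ) * ((t:ℂ) • 1) *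
      (star (hA.eigenvectorUnitary : Matrix (Fin n) (Fin n) ℂ)) := by
    rw [mul_smul_comm, smul_mul_assoc, mul_one, hU]
  rw [h1, ← Matrix.add_mul, ← Matrix.mul_add]
  congr 2
  rw [Matrix.smul_one_eq_diagonal, Matrix.diagonal_add]
  congr 1
  ext i
  push_cast
  simp

lemma aux_det_shift (A : Matrix (Fin n) (Fin n) ℂ) (hA : A.IsHermitian) (t : ℝ) :
    (A + (t : ℂ) • 1).det = ((∏ i, (hA.eigenvalues i + t) : ℝ) : ℂ) := by
  rw [aux_shift_eq A hA t, Matrix.det_mul_right_comm]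
  have hU : (hA.eigenvectorUnitary : Matrix (Fin n) (Fin n) ℂ) *
      star (hA.eigenvectorUnitary : Matrix (Fin n) (Fin n) ℂ) = 1 :=
    Matrix.mem_unitaryGroup_iff.mp hA.eigenvectorUnitary.2
  rw [hU, Matrix.one_mul, Matrix.det_diagonal]
  push_cast
  rfl

lemma aux_psd_shift (A : Matrix (Fin n) (Fin n) ℂ) (hA : A.IsHermitian) (t : ℝ)
    (h : ∀ i, 0 ≤ hA.eigenvalues i + t) : (A + (t : ℂ) • 1).PosSemidef := by
  rw [aux_shift_eq A hA t]
  have heq : (star (hA.eigenvectorUnitary : Matrix (Fin n) (Fin n) ℂ)) =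
      (hA.eigenvectorUnitary : Matrix (Fin n) (Fin n) ℂ)ᴴ := rfl
  rw [heq]
  refine Matrix.PosSemidef.mul_mul_conjTranspose_same ?_ _
  refine Matrix.posSemidef_diagonal_iff.mpr fun i => ?_
  exact_mod_cast h i

lemma aux_eig_shift_nonneg (A : Matrix (Fin n) (Fin n) ℂ) (hA : A.IsHermitian) (t : ℝ)
    (h : (A + (t : ℂ) • 1).PosSemidef) : ∀ i, 0 ≤ hA.eigenvalues i + t := by
  intro i
  set v : Fin n → ℂ := ⇑(hA.eigenvectorBasis i) with hv
  have hvA : A *ᵥ v = hA.eigenvalues i • v := hA.mulVec_eigenvectorBasis i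
  have hnorm : dotProduct (star v) v = 1 := by
    have h1 : (inner ℂ (hA.eigenvectorBasis i) (hA.eigenvectorBasis i) : ℂ) = 1 := by
      simpa using orthonormal_iff_ite.mp hA.eigenvectorBasis.orthonormal i i
    rw [EuclideanSpace.inner_eq_star_dotProduct] at h1
    exact (dotProduct_comm _ _).trans h1
  have h2 := h.dotProduct_mulVec_nonneg v
  rw [Matrix.add_mulVec, hvA, Matrix.smul_mulVec, Matrix.one_mulVec,
    dotProduct_add, dotProduct_smul, dotProduct_smul, hnorm] at h2
  simp only [smul_eq_mul, mul_one, Complex.real_smul] at h2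
  have h3 : (0:ℂ) ≤ ((hA.eigenvalues i + t : ℝ) : ℂ) := by push_cast; exact h2
  exact_mod_cast h3

lemma aux_real_unique (hn : 1 ≤ n) (μ : Fin n → ℝ) (s : ℝ)
    (h0 : ∀ i, 0 ≤ μ i) (hs : ∀ i, 0 ≤ μ i + s)
    (hdet : ∏ i, (μ i + s) = ∏ i, μ i) : s = 0 := by
  have key : ∀ (ν : Fin n → ℝ) (r : ℝ), (∀ i, 0 ≤ ν i) → (∀ i, 0 ≤ ν i + r) →
      ∏ i, (ν i + r) = ∏ i, ν i → ¬ 0 < r := by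
    intro ν r hν hνr hd hr
    have hpos : ∀ i, 0 < ν i + r := fun i => add_pos_of_nonneg_of_pos (hν i) hr
    have hprodpos : 0 < ∏ i, (ν i + r) := Finset.prod_pos fun i _ => hpos i
    have hprodν : 0 < ∏ i, ν i := hd ▸ hprodpos
    have hνpos : ∀ i, 0 < ν i := by
      intro i
      rcases lt_or_eq_of_le (hν i) with h | h
      · exact h
      · exfalso
        rw [Finset.prod_eq_zero (Finset.mem_univ i) h.symm] at hprodν
        exact lt_irrefl 0 hprodν
    have : ∏ i, ν i < ∏ i, (ν i + r) := by
      obtain ⟨i0⟩ : Nonempty (Fin n) := ⟨⟨0, hn⟩⟩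
      refine Finset.prod_lt_prod (fun i _ => hνpos i) (fun i _ => by linarith [hνpos i])
        ⟨i0, Finset.mem_univ i0, by linarith [hνpos i0]⟩
    linarith [hd]
  rcases lt_trichotomy s 0 with h | h | h
  · exfalso
    exact key (fun i => μ i + s) (-s) hs (by intro i; simpa using h0 i)
      (by simpa using hdet.symm) (by linarith)
  · exact h
  · exact absurd h (key μ s h0 hs hdet)

lemma aux_real_exists (hn : 1 ≤ n) (ν : Fin n → ℝ) (c : ℝ) (hc : 0 ≤ c) :
    ∃ t : ℝ, (∀ i, 0 ≤ ν i + t) ∧ ∏ i, (ν i + t) = c := by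
  have hne : (Finset.univ : Finset (Fin n)).Nonempty := ⟨⟨0, hn⟩, Finset.mem_univ _⟩
  set m := Finset.univ.inf' hne ν with hm
  obtain ⟨i0, _, hi0⟩ := Finset.exists_mem_eq_inf' hne ν
  have hmle : ∀ i, m ≤ ν i := fun i => Finset.inf'_le ν (Finset.mem_univ i)
  rcases eq_or_lt_of_le hc with h | h
  · refine ⟨-m, fun i => by linarith [hmle i], ?_⟩
    rw [← h]
    exact Finset.prod_eq_zero (Finset.mem_univ i0) (by rw [← hi0]; ring)
  · set f : ℝ → ℝ := fun t => ∏ i, (ν i + t) with hf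
    have hcont : Continuous f := by
      apply continuous_finset_prod
      intro i _
      exact continuous_const.add continuous_id
    have hfa : f (-m) = 0 :=
      Finset.prod_eq_zero (Finset.mem_univ i0) (by rw [← hi0]; ring)
    have hfb : c ≤ f (-m + 1 + c) := by
      have h1 : ∀ i ∈ Finset.univ, (1:ℝ) ≤ ν i + (-m + 1 + c) := by
        intro i _; have := hmle i; linarith
      calc c ≤ ν i0 + (-m + 1 + c) := by rw [← hi0]; linarith
        _ = ∏ i, (if i = i0 then ν i0 + (-m + 1 + c) else 1) := by
            rw [Finset.prod_ite_eq' Finset.univ i0 (fun _ => ν i0 + (-m + 1 + c))]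
            simp
        _ ≤ f (-m + 1 + c) := by
            apply Finset.prod_le_prod
            · intro i _
              rcases eq_or_ne i i0 with hii | hii
              · rw [hii, if_pos rfl]; linarith [h1 i0 (Finset.mem_univ i0)]
              · rw [if_neg hii]; norm_num
            · intro i _
              rcases eq_or_ne i i0 with hii | hii
              · subst hii; rw [if_pos rfl]
              · rw [if_neg hii]; exact h1 i (Finset.mem_univ i)
    have hab : (-m : ℝ) ≤ -m + 1 + c := by linarith
    have hIVT := intermediate_value_Icc hab hcont.continuousOn
    have hcmem : c ∈ Set.Icc (f (-m)) (f (-m + 1 + c)) := ⟨by rw [hfa]; exact hc, hfb⟩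
    obtain ⟨t, ht, hft⟩ := hIVT hcmem
    exact ⟨t, fun i => by have := hmle i; have := ht.1; linarith, hft⟩

end Aux

/-- The map `M(n,ℂ) → (Herm(n)/ℝ·I) × ℂ`, `(A, λ) ↦ (A + ℝ·I, λ)`, is a bijection. -/
theorem stmt5 (n : ℕ) (hn : 1 ≤ n) :
    Function.Bijective (fun p : MSet n =>
      ((Submodule.Quotient.mk p.1.1 : HermSub n ⧸ lineI n), p.1.2)) := by
  constructor
  · -- injective
    rintro ⟨⟨A, lam⟩, hApsd, hAdet⟩ ⟨⟨B, mu⟩, hBpsd, hBdet⟩ h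
    simp only [Prod.mk.injEq] at h
    obtain ⟨hq, hlm⟩ := h
    rw [Submodule.Quotient.eq] at hq
    rw [lineI, Submodule.mem_span_singleton] at hq
    obtain ⟨s, hs⟩ := hq
    -- A = B + s • 1 as matrices
    have hmat : (A : Matrix (Fin n) (Fin n) ℂ) = (B : Matrix (Fin n) (Fin n) ℂ) + (s : ℂ) • 1 := by
      have := congrArg (Subtype.val) hs
      simp only [Submodule.coe_smul, AddSubgroupClass.coe_sub] at this
      have h2 : (A : Matrix (Fin n) (Fin n) ℂ) - B = s • (1 : Matrix (Fin n) (Fin n) ℂ) := this.symm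
      rw [aux_rsmul_one] at h2
      rw [sub_eq_iff_eq_add] at h2
      rw [h2, add_comm]
    have hBH : (B : Matrix (Fin n) (Fin n) ℂ).IsHermitian := B.2
    set μ := hBH.eigenvalues with hμ
    have h0 : ∀ i, 0 ≤ μ i := fun i => hBpsd.eigenvalues_nonneg i
    have hsn : ∀ i, 0 ≤ μ i + s := by
      apply aux_eig_shift_nonneg (B : Matrix (Fin n) (Fin n) ℂ) hBH s
      rw [← hmat]; exact hApsd
    have hdet : ∏ i, (μ i + s) = ∏ i, μ i := by
      have hdA : ((∏ i, (μ i + s) : ℝ) : ℂ) = ((∏ i, μ i : ℝ) : ℂ) := by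
        rw [← aux_det_shift (B : Matrix (Fin n) (Fin n) ℂ) hBH s, ← hmat, hAdet, hlm, ← hBdet,
          hBH.det_eq_prod_eigenvalues]
        push_cast
        rfl
      exact_mod_cast hdA
    have hs0 : s = 0 := aux_real_unique hn μ s h0 hsn hdet
    have hAB : A = B := by
      rw [hs0, zero_smul] at hs
      have := sub_eq_zero.mp hs.symm
      exact this
    exact Subtype.ext (Prod.ext hAB hlm)
  · -- surjective
    rintro ⟨q, lam⟩
    obtain ⟨B, hB⟩ := Submodule.Quotient.mk_surjective (lineI n) q
    have hBH : (B : Matrix (Fin n) (Fin n) ℂ).IsHermitian := B.2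
    set ν := hBH.eigenvalues with hν
    obtain ⟨t, ht0, htdet⟩ := aux_real_exists hn ν ((‖lam‖) ^ 2)
      (by positivity)
    set e : HermSub n := ⟨1, one_mem_hermSub n⟩ with he
    set A : HermSub n := B + t • e with hA
    have hAcoe : (A : Matrix (Fin n) (Fin n) ℂ) = (B : Matrix (Fin n) (Fin n) ℂ) + (t : ℂ) • 1 := by
      simp only [hA, Submodule.coe_add, Submodule.coe_smul, he]
      rw [aux_rsmul_one]
    have hmem : (A, lam) ∈ MSet n := by
      constructor
      · rw [hAcoe]
        exact aux_psd_shift _ hBH t ht0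
      · rw [hAcoe, aux_det_shift _ hBH t, htdet]
        push_cast
        ring
    refine ⟨⟨(A, lam), hmem⟩, ?_⟩
    simp only [Prod.mk.injEq]
    constructor
    · rw [← hB]
      rw [Submodule.Quotient.eq]
      have : A - B = t • e := by rw [hA]; abel
      rw [this, lineI]
      exact Submodule.smul_mem _ t (Submodule.mem_span_singleton_self e)
    · trivial
end

section
/- Let n ≥ 1. The map φ : Matrix (Fin n) (Fin n) ℂ → (Herm(n)/ℝ·I) × ℂ, φ(X) = (X X* + ℝ·I, det X), is surjective, and its fibres coincide exactly with the orbits of the right action of SU(n) given by X ↦ X C⁻¹: that is, φ(X) = φ(Y) if and only if Y = X C for some C ∈ SU(n). -/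
open Matrix
open scoped ComplexOrder

/-- The map `φ : X ↦ (X X* + ℝ·I, det X)`. -/
noncomputable def phi (n : ℕ) (X : Matrix (Fin n) (Fin n) ℂ) :
    (HermSub n ⧸ lineI n) × ℂ :=
  (Submodule.Quotient.mk ⟨X * Xᴴ, mulH_mem_hermSub X⟩, X.det)

open scoped InnerProductSpace

namespace AuxStmt9

variable {n : ℕ}

/-- The `i`-th row of `Z`, conjugated, as a Euclidean vector. -/
noncomputable def colVec (Z : Matrix (Fin n) (Fin n) ℂ) (i : Fin n) :
    EuclideanSpace ℂ (Fin n) := WithLp.toLp 2 (fun j => star (Z i j))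

lemma inner_colVec (Z W : Matrix (Fin n) (Fin n) ℂ) (i k : Fin n) :
    ⟪colVec Z i, colVec W k⟫_ℂ = (Z * Wᴴ) i k := by
  simp only [PiLp.inner_apply, colVec, RCLike.inner_apply, starRingEnd_apply, star_star,
    mul_apply, conjTranspose_apply]
  exact Finset.sum_congr rfl fun j _ => mul_comm _ _

lemma star_ofReal (a : ℝ) : star ((a : ℝ) : ℂ) = ((a : ℝ) : ℂ) := by
  rw [Complex.star_def, Complex.conj_ofReal]

set_option maxHeartbeats 1000000 in
set_option maxRecDepth 10000 in
/-- Key construction: if `X Xᴴ` is a nonnegative real diagonal matrix, there is a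
unitary `B` with `Bᴴ Xᴴ = diagonal √r`. -/
lemma exists_unitary_diag {r : Fin n → ℝ} (hr : ∀ i, 0 ≤ r i)
    {X : Matrix (Fin n) (Fin n) ℂ}
    (hX : X * Xᴴ = diagonal (fun i => (r i : ℂ))) :
    ∃ B : Matrix (Fin n) (Fin n) ℂ, Bᴴ * B = 1 ∧
      Bᴴ * Xᴴ = diagonal (fun i => ((Real.sqrt (r i) : ℝ) : ℂ)) := by
  set x : Fin n → EuclideanSpace ℂ (Fin n) := colVec X with hxdef
  have hinner : ∀ i k, ⟪x i, x k⟫_ℂ = if i = k then (r i : ℂ) else 0 := by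
    intro i k
    rw [hxdef, inner_colVec, hX, diagonal_apply]
  set s : Set (Fin n) := {i | r i ≠ 0} with hsdef
  set v : Fin n → EuclideanSpace ℂ (Fin n) :=
    fun i => (((Real.sqrt (r i))⁻¹ : ℝ) : ℂ) • x i with hvdef
  have hsq : ∀ i, Real.sqrt (r i) * Real.sqrt (r i) = r i :=
    fun i => Real.mul_self_sqrt (hr i)
  have hne : ∀ i ∈ s, Real.sqrt (r i) ≠ 0 := by
    intro i hi
    exact Real.sqrt_ne_zero'.mpr (lt_of_le_of_ne (hr i) (Ne.symm hi))
  have hxv : ∀ i ∈ s, x i = ((Real.sqrt (r i) : ℝ) : ℂ) • v i := by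
    intro i hi
    rw [hvdef]
    simp only
    rw [smul_smul, ← Complex.ofReal_mul, mul_inv_cancel₀ (hne i hi)]
    simp
  have hx0 : ∀ i ∉ s, x i = 0 := by
    intro i hi
    have h0 : r i = 0 := by simpa [hsdef] using hi
    have h1 : ⟪x i, x i⟫_ℂ = 0 := by rw [hinner i i]; simp [h0]
    exact inner_self_eq_zero.mp h1
  have hvo : Orthonormal ℂ (s.restrict v) := by
    rw [orthonormal_iff_ite]
    rintro ⟨i, hi⟩ ⟨k, hk⟩
    simp only [Set.restrict, Set.domRestrict_apply, hvdef, inner_smul_left, inner_smul_right, hinner,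
      Subtype.mk.injEq]
    rw [starRingEnd_apply, star_ofReal]
    by_cases h : i = k
    · subst h
      simp only [if_pos rfl, if_true]
      have h2 := hne i hi
      norm_cast
      field_simp
      rw [Real.sq_sqrt (hr i)]
    · simp [h]
  obtain ⟨b, hb⟩ := hvo.exists_orthonormalBasis_extension_of_card_eq (by simp)
  refine ⟨Matrix.of (fun j i => (b i : EuclideanSpace ℂ (Fin n)) j), ?_, ?_⟩
  · ext i k
    have h := (orthonormal_iff_ite.mp b.orthonormal) i k
    simp only [PiLp.inner_apply, RCLike.inner_apply, starRingEnd_apply] at h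
    rw [mul_apply, one_apply]
    simp only [conjTranspose_apply, of_apply]
    rw [← h]; exact Finset.sum_congr rfl fun j _ => mul_comm _ _
  · ext k i
    have key : ⟪(b k : EuclideanSpace ℂ (Fin n)), x i⟫_ℂ
        = ∑ j, star ((b k : EuclideanSpace ℂ (Fin n)) j) * star (X i j) := by
      rw [PiLp.inner_apply]
      exact Finset.sum_congr rfl fun j _ => by
        rw [RCLike.inner_apply, starRingEnd_apply, hxdef]; exact mul_comm _ _
    simp only [mul_apply, conjTranspose_apply, of_apply, diagonal_apply]
    rw [← key]
    by_cases hi : i ∈ s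
    · rw [hxv i hi, inner_smul_right, ← hb i hi,
        orthonormal_iff_ite.mp b.orthonormal k i]
      split <;> simp_all
    · rw [hx0 i hi, inner_zero_right]
      have h0 : r i = 0 := by simpa [hsdef] using hi
      rcases eq_or_ne k i with rfl | h
      · simp [h0]
      · simp [h]


variable {n : ℕ}

lemma det_star_unit {B : Matrix (Fin n) (Fin n) ℂ} (h : Bᴴ * B = 1) :
    B.det * star B.det = 1 := by
  have h2 := congrArg det h
  rw [det_mul, det_conjTranspose, det_one] at h2
  rw [mul_comm]; exact h2

/-- Spectral theorem packaged with opaque witnesses. -/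
lemma spectral_package_herm {M : Matrix (Fin n) (Fin n) ℂ} (hM : M.IsHermitian) :
    ∃ (μ : Fin n → ℝ) (V : Matrix (Fin n) (Fin n) ℂ),
      Vᴴ * V = 1 ∧ V * Vᴴ = 1 ∧
      M = V * diagonal (fun i => ((μ i : ℝ) : ℂ)) * Vᴴ ∧
      M.det = ∏ i, ((μ i : ℝ) : ℂ) ∧
      (M.PosSemidef → ∀ i, 0 ≤ μ i) := by
  refine ⟨hM.eigenvalues, (hM.eigenvectorUnitary : Matrix (Fin n) (Fin n) ℂ),
    ?_, ?_, ?_, hM.det_eq_prod_eigenvalues, fun hPS i => ?_⟩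
  · rw [← star_eq_conjTranspose]
    exact (Unitary.mem_iff.mp hM.eigenvectorUnitary.2).1
  · rw [← star_eq_conjTranspose]
    exact (Unitary.mem_iff.mp hM.eigenvectorUnitary.2).2
  · have hs := hM.spectral_theorem
    rw [Unitary.conjStarAlgAut_apply, star_eq_conjTranspose] at hs
    exact hs
  · exact hPS.eigenvalues_nonneg i

lemma keySingular {X Y : Matrix (Fin n) (Fin n) ℂ}
    (h : X * Xᴴ = Y * Yᴴ) (hd : X.det = 0) :
    ∃ C : Matrix (Fin n) (Fin n) ℂ, C * Cᴴ = 1 ∧ C.det = 1 ∧ Y = X * C := by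
  obtain ⟨μ, V, hV1, hV2, hspec, hdetM, hnn⟩ :=
    spectral_package_herm (isHermitian_mul_conjTranspose_self X)
  have hμ0 : ∀ i, 0 ≤ μ i := hnn (posSemidef_self_mul_conjTranspose X)
  set D : Matrix (Fin n) (Fin n) ℂ := diagonal (fun i => ((μ i : ℝ) : ℂ)) with hDdef
  have hXd : (Vᴴ * X) * (Vᴴ * X)ᴴ = D := by
    calc (Vᴴ * X) * (Vᴴ * X)ᴴ = Vᴴ * (X * Xᴴ) * V := by
          rw [conjTranspose_mul, conjTranspose_conjTranspose]
          simp only [Matrix.mul_assoc]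
    _ = Vᴴ * (V * D * Vᴴ) * V := by rw [← hspec]
    _ = (Vᴴ * V) * D * (Vᴴ * V) := by simp only [Matrix.mul_assoc]
    _ = D := by rw [hV1, Matrix.one_mul, Matrix.mul_one]
  have hYd : (Vᴴ * Y) * (Vᴴ * Y)ᴴ = D := by
    calc (Vᴴ * Y) * (Vᴴ * Y)ᴴ = Vᴴ * (Y * Yᴴ) * V := by
          rw [conjTranspose_mul, conjTranspose_conjTranspose]
          simp only [Matrix.mul_assoc]
    _ = Vᴴ * (V * D * Vᴴ) * V := by rw [← h, ← hspec]
    _ = (Vᴴ * V) * D * (Vᴴ * V) := by simp only [Matrix.mul_assoc]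
    _ = D := by rw [hV1, Matrix.one_mul, Matrix.mul_one]
  have hdet0 : ∃ i₀, μ i₀ = 0 := by
    have h1 : det (X * Xᴴ) = 0 := by rw [det_mul, hd, zero_mul]
    rw [hdetM] at h1
    obtain ⟨i₀, _, h2⟩ := Finset.prod_eq_zero_iff.mp h1
    exact ⟨i₀, by exact_mod_cast h2⟩
  obtain ⟨i₀, hi₀⟩ := hdet0
  obtain ⟨B, hB1, hBX⟩ := exists_unitary_diag hμ0 hXd
  obtain ⟨Cm, hC1, hCY⟩ := exists_unitary_diag hμ0 hYd
  have hB2 : B * Bᴴ = 1 := mul_eq_one_comm.mp hB1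
  have hC2 : Cm * Cmᴴ = 1 := mul_eq_one_comm.mp hC1
  set δ : ℂ := B.det * star Cm.det with hδdef
  have hBu := det_star_unit hB1
  have hCu := det_star_unit hC1
  have hδ : δ * star δ = 1 := by
    have e : δ * star δ = (B.det * star B.det) * (Cm.det * star Cm.det) := by
      simp only [hδdef, star_mul', star_star]; ring
    rw [e, hBu, hCu, mul_one]
  have hδne : δ ≠ 0 := by
    intro h0; rw [h0, zero_mul] at hδ; exact zero_ne_one hδ
  set q : Fin n → ℂ := fun i => if i = i₀ then δ⁻¹ else 1 with hqdef
  have hq : ∀ i, q i * star (q i) = 1 := by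
    intro i
    by_cases hii : i = i₀
    · simp only [hqdef, if_pos hii]
      rw [show star (δ⁻¹ : ℂ) = (star δ)⁻¹ from by simp, ← mul_inv, hδ, inv_one]
    · simp [hqdef, hii]
  set U : Matrix (Fin n) (Fin n) ℂ := B * diagonal q * Cmᴴ with hUdef
  have hUH : Uᴴ = Cm * diagonal (fun i => star (q i)) * Bᴴ := by
    rw [hUdef, conjTranspose_mul, conjTranspose_mul, conjTranspose_conjTranspose,
      diagonal_conjTranspose]
    simp only [Matrix.mul_assoc]
    rfl
  refine ⟨U, ?_, ?_, ?_⟩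
  · rw [hUH, hUdef]
    rw [show B * diagonal q * Cmᴴ * (Cm * diagonal (fun i => star (q i)) * Bᴴ)
        = B * (diagonal q * ((Cmᴴ * Cm) * diagonal (fun i => star (q i)))) * Bᴴ from by
      simp only [Matrix.mul_assoc], hC1, Matrix.one_mul, diagonal_mul_diagonal]
    have e2 : (fun i => q i * star (q i)) = fun _ : Fin n => (1 : ℂ) := funext hq
    rw [e2, diagonal_one, Matrix.mul_one, hB2]
  · rw [hUdef, det_mul, det_mul, det_diagonal, det_conjTranspose]
    rw [hqdef, Finset.prod_ite_eq' Finset.univ i₀ (fun _ => δ⁻¹), if_pos (Finset.mem_univ i₀)]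
    rw [show B.det * δ⁻¹ * star Cm.det = (B.det * star Cm.det) * δ⁻¹ from by ring, ← hδdef,
      mul_inv_cancel₀ hδne]
  · have hXr : (Vᴴ * X)ᴴ = B * diagonal (fun i => ((Real.sqrt (μ i) : ℝ) : ℂ)) := by
      rw [← Matrix.one_mul ((Vᴴ * X)ᴴ), ← hB2, Matrix.mul_assoc, hBX]
    have hYr : (Vᴴ * Y)ᴴ = Cm * diagonal (fun i => ((Real.sqrt (μ i) : ℝ) : ℂ)) := by
      rw [← Matrix.one_mul ((Vᴴ * Y)ᴴ), ← hC2, Matrix.mul_assoc, hCY]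
    have hqd : diagonal (fun i => star (q i)) *
        diagonal (fun i => ((Real.sqrt (μ i) : ℝ) : ℂ))
        = diagonal (fun i => ((Real.sqrt (μ i) : ℝ) : ℂ)) := by
      rw [diagonal_mul_diagonal]
      refine congrArg diagonal (funext fun i => ?_)
      by_cases hii : i = i₀
      · subst hii; simp [hqdef, hi₀]
      · simp [hqdef, hii]
    have hYX' : (Vᴴ * Y)ᴴ = Uᴴ * (Vᴴ * X)ᴴ := by
      rw [hUH, hXr, hYr,
        show Cm * diagonal (fun i => star (q i)) * Bᴴ
            * (B * diagonal (fun i => ((Real.sqrt (μ i) : ℝ) : ℂ)))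
          = Cm * (diagonal (fun i => star (q i)) * ((Bᴴ * B)
            * diagonal (fun i => ((Real.sqrt (μ i) : ℝ) : ℂ)))) from by
          simp only [Matrix.mul_assoc], hB1, Matrix.one_mul, hqd]
    have hYX : Vᴴ * Y = (Vᴴ * X) * U := by
      have h3 := congrArg conjTranspose hYX'
      rwa [conjTranspose_conjTranspose, conjTranspose_mul, conjTranspose_conjTranspose,
        conjTranspose_conjTranspose] at h3
    calc Y = (V * Vᴴ) * Y := by rw [hV2, Matrix.one_mul]
    _ = V * (Vᴴ * X * U) := by rw [Matrix.mul_assoc, hYX]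
    _ = (V * Vᴴ) * X * U := by simp only [Matrix.mul_assoc]
    _ = X * U := by rw [hV2, Matrix.one_mul]

lemma smul_one_diag {s : ℝ} :
    s • (1 : Matrix (Fin n) (Fin n) ℂ) = diagonal (fun _ : Fin n => (s : ℂ)) := by
  ext i j
  by_cases hij : i = j <;>
    simp [hij, Matrix.smul_apply, one_apply, diagonal_apply, Complex.real_smul]

lemma det_shift (hn : 1 ≤ n) {M : Matrix (Fin n) (Fin n) ℂ} (hM : M.PosSemidef)
    {s : ℝ} (hs : 0 < s) : (M + s • 1).det ≠ M.det := by
  haveI : Nonempty (Fin n) := ⟨⟨0, hn⟩⟩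
  obtain ⟨μ, V, hV1, hV2, hspec, hdetM, hnn⟩ := spectral_package_herm hM.1
  have hμ0 := hnn hM
  have hconst : diagonal (fun _ : Fin n => (s : ℂ)) = (s : ℂ) • (1 : Matrix (Fin n) (Fin n) ℂ) := by
    ext i j
    by_cases hij : i = j <;> simp [hij, Matrix.smul_apply, one_apply, diagonal_apply]
  have h2 : V * diagonal (fun _ : Fin n => (s : ℂ)) * Vᴴ = diagonal (fun _ : Fin n => (s : ℂ)) := by
    rw [hconst, Matrix.mul_smul, Matrix.mul_one, Matrix.smul_mul, hV2]
  have h1 : M + s • (1 : Matrix (Fin n) (Fin n) ℂ)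
      = V * diagonal (fun i => ((μ i + s : ℝ) : ℂ)) * Vᴴ := by
    rw [smul_one_diag, hspec]
    conv_lhs => rw [← h2]
    rw [← Matrix.add_mul, ← Matrix.mul_add, diagonal_add]
    push_cast
    rfl
  have hdet1 : (M + s • (1 : Matrix (Fin n) (Fin n) ℂ)).det = ((∏ i, (μ i + s) : ℝ) : ℂ) := by
    rw [h1, det_mul, det_mul, det_conjTranspose,
      show V.det * (diagonal (fun i => ((μ i + s : ℝ) : ℂ))).det * star V.det
        = (V.det * star V.det) * (diagonal (fun i => ((μ i + s : ℝ) : ℂ))).det from by ring,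
      det_star_unit hV1, one_mul, det_diagonal]
    push_cast
    rfl
  have hdet2 : M.det = ((∏ i, μ i : ℝ) : ℂ) := by rw [hdetM]; push_cast; rfl
  rw [hdet1, hdet2]
  intro hcontra
  have hR : (∏ i, (μ i + s)) = ∏ i, μ i := by exact_mod_cast hcontra
  have hlt : (∏ i, μ i) < ∏ i, (μ i + s) := by
    by_cases hall : ∀ i, 0 < μ i
    · exact Finset.prod_lt_prod_of_nonempty (fun i _ => hall i)
        (fun i _ => lt_add_of_pos_right _ hs) Finset.univ_nonempty
    · push_neg at hall
      obtain ⟨j, hj⟩ := hall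
      have hj0 : μ j = 0 := le_antisymm hj (hμ0 j)
      rw [Finset.prod_eq_zero (Finset.mem_univ j) hj0]
      exact Finset.prod_pos fun i _ => add_pos_of_nonneg_of_pos (hμ0 i) hs
  rw [hR] at hlt
  exact lt_irrefl _ hlt

lemma conj_shift {V : Matrix (Fin n) (Fin n) ℂ} (hV2 : V * Vᴴ = 1) (μ : Fin n → ℝ) (t : ℝ) :
    V * diagonal (fun i => ((μ i + t : ℝ) : ℂ)) * Vᴴ
      = V * diagonal (fun i => ((μ i : ℝ) : ℂ)) * Vᴴ + t • 1 := by
  have hconst : diagonal (fun _ : Fin n => (t : ℂ))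
      = (t : ℂ) • (1 : Matrix (Fin n) (Fin n) ℂ) := by
    ext i j
    by_cases hij : i = j <;> simp [hij, Matrix.smul_apply, one_apply, diagonal_apply]
  have h2 : V * diagonal (fun _ : Fin n => (t : ℂ)) * Vᴴ = diagonal (fun _ : Fin n => (t : ℂ)) := by
    rw [hconst, Matrix.mul_smul, Matrix.mul_one, Matrix.smul_mul, hV2]
  calc V * diagonal (fun i => ((μ i + t : ℝ) : ℂ)) * Vᴴ
      = V * (diagonal (fun i => ((μ i : ℝ) : ℂ)) + diagonal (fun _ => (t : ℂ))) * Vᴴ := by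
        rw [diagonal_add]; push_cast; rfl
    _ = V * diagonal (fun i => ((μ i : ℝ) : ℂ)) * Vᴴ
        + V * diagonal (fun _ : Fin n => (t : ℂ)) * Vᴴ := by
        rw [Matrix.mul_add, Matrix.add_mul]
    _ = V * diagonal (fun i => ((μ i : ℝ) : ℂ)) * Vᴴ + t • 1 := by
        rw [h2, smul_one_diag]

lemma surj (hn : 1 ≤ n) {A : Matrix (Fin n) (Fin n) ℂ} (hA : A.IsHermitian) (z : ℂ) :
    ∃ (X : Matrix (Fin n) (Fin n) ℂ) (t : ℝ), X * Xᴴ = A + t • 1 ∧ X.det = z := by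
  haveI : Nonempty (Fin n) := ⟨⟨0, hn⟩⟩
  obtain ⟨μ, V, hV1, hV2, hspec, hdetM, -⟩ := spectral_package_herm hA
  obtain ⟨i₀, -, hmin⟩ := Finset.exists_min_image Finset.univ μ Finset.univ_nonempty
  set t₀ : ℝ := -μ i₀ with ht₀def
  set Z : ℝ := ‖z‖ ^ 2 with hZdef
  have hZ : 0 ≤ Z := by positivity
  set T : ℝ := t₀ + max 1 Z with hTdef
  have hf : Continuous fun t : ℝ => ∏ i, (μ i + t) := by
    apply continuous_finset_prod
    exact fun i _ => continuous_const.add continuous_id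
  have hft₀ : (∏ i, (μ i + t₀)) = 0 :=
    Finset.prod_eq_zero (Finset.mem_univ i₀) (by rw [ht₀def]; ring)
  have hfT : Z ≤ ∏ i, (μ i + T) := by
    have h1 : ∀ i, max 1 Z ≤ μ i + T := fun i => by
      have h2 := hmin i (Finset.mem_univ i)
      rw [hTdef, ht₀def]; linarith
    calc Z ≤ max 1 Z := le_max_right _ _
      _ = max 1 Z ^ 1 := (pow_one _).symm
      _ ≤ max 1 Z ^ n := pow_le_pow_right₀ (le_max_left 1 Z) hn
      _ = ∏ _i : Fin n, max 1 Z := by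
          rw [Finset.prod_const, Finset.card_univ, Fintype.card_fin]
      _ ≤ ∏ i, (μ i + T) := Finset.prod_le_prod
          (fun i _ => le_trans zero_le_one (le_max_left _ _)) (fun i _ => h1 i)
  have ht₀T : t₀ ≤ T := by
    have := le_max_left 1 Z; rw [hTdef]; linarith
  have hmem : Z ∈ Set.Icc ((fun t : ℝ => ∏ i, (μ i + t)) t₀) ((fun t : ℝ => ∏ i, (μ i + t)) T) := by
    constructor
    · simpa [hft₀] using hZ
    · exact hfT
  obtain ⟨t, htmem, hft⟩ := intermediate_value_Icc ht₀T hf.continuousOn hmem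
  simp only at hft
  have htpos : ∀ i, 0 ≤ μ i + t := fun i => by
    have h2 := hmin i (Finset.mem_univ i)
    have h3 := htmem.1
    rw [ht₀def] at h3
    linarith
  set g : Fin n → ℝ := fun i => Real.sqrt (μ i + t) with hgdef
  have hg2 : ∀ i, g i * g i = μ i + t := fun i => Real.mul_self_sqrt (htpos i)
  set r : ℝ := ∏ i, g i with hrdef
  have hr2 : r * r = ‖z‖ ^ 2 := by
    rw [hrdef, ← Finset.prod_mul_distrib, Finset.prod_congr rfl fun i _ => hg2 i]
    exact hft
  have hr0 : 0 ≤ r := Finset.prod_nonneg fun i _ => Real.sqrt_nonneg _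
  have hrabs : r = ‖z‖ := by
    have h4 := Real.sqrt_mul_self hr0
    rw [hr2] at h4
    rw [← h4, Real.sqrt_sq (norm_nonneg z)]
  have hVu : V.det * star V.det = 1 := det_star_unit hV1
  have hVne : V.det ≠ 0 := by
    intro h0; rw [h0, zero_mul] at hVu; exact zero_ne_one hVu
  set w : ℂ := if z = 0 then 1 else z / (V.det * (r : ℂ)) with hwdef
  have hw : w * star w = 1 := by
    by_cases hz : z = 0
    · simp [hwdef, hz]
    · have hrne : r ≠ 0 := by
        rw [hrabs]; simpa using hz
      simp only [hwdef, if_neg hz]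
      have hstar : star (z / (V.det * (r : ℂ))) = star z / (star V.det * (r : ℂ)) := by
        rw [star_div₀, star_mul', star_ofReal]
      rw [hstar, div_mul_div_comm]
      rw [show z * star z = ((‖z‖ ^ 2 : ℝ) : ℂ) from by
        rw [Complex.sq_norm, ← Complex.mul_conj]; rfl]
      rw [show V.det * (r : ℂ) * (star V.det * (r : ℂ))
          = (V.det * star V.det) * ((r : ℂ) * (r : ℂ)) from by ring, hVu, one_mul,
        ← Complex.ofReal_mul, hr2]
      apply div_self
      simp only [ne_eq, Complex.ofReal_eq_zero]
      exact pow_ne_zero 2 (norm_ne_zero_iff.mpr hz)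
  set q : Fin n → ℂ := fun i => if i = i₀ then w else 1 with hqdef
  have hq : ∀ i, q i * star (q i) = 1 := by
    intro i
    by_cases hii : i = i₀
    · simp only [hqdef, if_pos hii]; exact hw
    · simp [hqdef, hii]
  refine ⟨V * diagonal (fun i => (g i : ℂ) * q i), t, ?_, ?_⟩
  · rw [conjTranspose_mul, diagonal_conjTranspose,
      show V * diagonal (fun i => (g i : ℂ) * q i)
          * (diagonal (star fun i => (g i : ℂ) * q i) * Vᴴ)
        = V * (diagonal (fun i => (g i : ℂ) * q i)
          * diagonal (star fun i => (g i : ℂ) * q i)) * Vᴴ from by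
        simp only [Matrix.mul_assoc], diagonal_mul_diagonal]
    rw [show (fun i => ((g i : ℂ) * q i) * (star fun i => (g i : ℂ) * q i) i)
        = fun i => ((μ i + t : ℝ) : ℂ) from funext fun i => by
      simp only [Pi.star_apply, star_mul']
      rw [star_ofReal]
      rw [show (g i : ℂ) * q i * ((g i : ℂ) * star (q i))
          = ((g i : ℂ) * (g i : ℂ)) * (q i * star (q i)) from by ring, hq i, mul_one,
        ← Complex.ofReal_mul, hg2 i]]
    rw [conj_shift hV2 μ t, ← hspec]
  · rw [det_mul, det_diagonal, Finset.prod_mul_distrib]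
    rw [show (∏ i, ((g i : ℝ) : ℂ)) = ((r : ℝ) : ℂ) from by rw [hrdef]; push_cast; rfl]
    rw [hqdef, Finset.prod_ite_eq' Finset.univ i₀ (fun _ => w), if_pos (Finset.mem_univ i₀)]
    by_cases hz : z = 0
    · have hr00 : r = 0 := by rw [hrabs, hz]; simp
      rw [hwdef, if_pos hz, hr00, hz]
      simp
    · have hrne : r ≠ 0 := by rw [hrabs]; simpa using hz
      rw [hwdef, if_neg hz]
      field_simp

end AuxStmt9

/-- `φ(X) = (X X* + ℝ·I, det X)` is surjective, and its fibres coincide with the orbits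
of the right action `X ↦ X C⁻¹` of `SU(n)`. -/
theorem stmt9 (n : ℕ) (hn : 1 ≤ n) :
    Function.Surjective (phi n) ∧
    ∀ X Y : Matrix (Fin n) (Fin n) ℂ,
      phi n X = phi n Y ↔
        ∃ C : Matrix (Fin n) (Fin n) ℂ, C * Cᴴ = 1 ∧ C.det = 1 ∧ Y = X * C := by
  constructor
  · rintro ⟨qq, z⟩
    obtain ⟨A, rfl⟩ := Submodule.Quotient.mk_surjective (lineI n) qq
    obtain ⟨X, t, hXX, hdet⟩ :=
      AuxStmt9.surj hn (A.2 : (A : Matrix (Fin n) (Fin n) ℂ).IsHermitian) z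
    have h1 : (Submodule.Quotient.mk ⟨X * Xᴴ, mulH_mem_hermSub X⟩ : HermSub n ⧸ lineI n)
        = Submodule.Quotient.mk A := by
      rw [Submodule.Quotient.eq, lineI, Submodule.mem_span_singleton]
      refine ⟨t, Subtype.ext ?_⟩
      simp only [SetLike.val_smul, AddSubgroupClass.coe_sub]
      rw [hXX]
      abel
    exact ⟨X, by unfold phi; rw [Prod.mk.injEq]; exact ⟨h1, hdet⟩⟩
  · intro X Y
    constructor
    · intro hphi
      unfold phi at hphi
      rw [Prod.mk.injEq] at hphi
      obtain ⟨h1, h2⟩ := hphi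
      rw [Submodule.Quotient.eq, lineI, Submodule.mem_span_singleton] at h1
      obtain ⟨s, hs⟩ := h1
      have hs' : X * Xᴴ - Y * Yᴴ = s • (1 : Matrix (Fin n) (Fin n) ℂ) := by
        have h3 := congrArg Subtype.val hs
        simp only [SetLike.val_smul, AddSubgroupClass.coe_sub] at h3
        exact h3.symm
      have hdXY : (X * Xᴴ).det = (Y * Yᴴ).det := by
        rw [det_mul, det_mul, det_conjTranspose, det_conjTranspose, h2]
      have hs0 : s = 0 := by
        rcases lt_trichotomy s 0 with hlt | h0 | hgt
        · exfalso
          apply AuxStmt9.det_shift hn (Matrix.posSemidef_self_mul_conjTranspose X)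
            (neg_pos.mpr hlt)
          have h4 : X * Xᴴ + (-s) • (1 : Matrix (Fin n) (Fin n) ℂ) = Y * Yᴴ := by
            rw [neg_smul, ← hs']; abel
          rw [h4]; exact hdXY.symm
        · exact h0
        · exfalso
          apply AuxStmt9.det_shift hn (Matrix.posSemidef_self_mul_conjTranspose Y) hgt
          have h4 : Y * Yᴴ + s • (1 : Matrix (Fin n) (Fin n) ℂ) = X * Xᴴ := by
            rw [← hs']; abel
          rw [h4]; exact hdXY
      rw [hs0, zero_smul, sub_eq_zero] at hs'
      by_cases hdX : X.det = 0
      · exact AuxStmt9.keySingular hs' hdX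
      · refine ⟨X⁻¹ * Y, ?_, ?_, ?_⟩
        · have hXH : Xᴴ.det ≠ 0 := by
            rw [det_conjTranspose]; simpa using hdX
          rw [conjTranspose_mul, conjTranspose_nonsing_inv]
          calc X⁻¹ * Y * (Yᴴ * (Xᴴ)⁻¹) = X⁻¹ * (Y * Yᴴ) * (Xᴴ)⁻¹ := by
                simp only [Matrix.mul_assoc]
            _ = X⁻¹ * (X * Xᴴ) * (Xᴴ)⁻¹ := by rw [hs']
            _ = (X⁻¹ * X) * (Xᴴ * (Xᴴ)⁻¹) := by simp only [Matrix.mul_assoc]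
            _ = 1 := by
                rw [Matrix.nonsing_inv_mul X (isUnit_iff_ne_zero.mpr hdX), Matrix.mul_nonsing_inv Xᴴ (isUnit_iff_ne_zero.mpr hXH),
                  Matrix.mul_one]
        · rw [det_mul, Matrix.det_nonsing_inv, Ring.inverse_eq_inv', ← h2]
          exact inv_mul_cancel₀ hdX
        · rw [← Matrix.mul_assoc, Matrix.mul_nonsing_inv X (isUnit_iff_ne_zero.mpr hdX), Matrix.one_mul]
    · rintro ⟨C, hC, hdetC, rfl⟩
      have hXC : (X * C) * (X * C)ᴴ = X * Xᴴ := by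
        rw [conjTranspose_mul,
          show X * C * (Cᴴ * Xᴴ) = X * (C * Cᴴ) * Xᴴ from by simp only [Matrix.mul_assoc],
          hC, Matrix.mul_one]
      unfold phi
      rw [Prod.mk.injEq]
      exact ⟨congrArg Submodule.Quotient.mk (Subtype.ext hXC.symm),
        by rw [det_mul, hdetC, mul_one]⟩
end
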